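/- arXiv:2402.17995 — 4 statements merged into one kernel-verified Lean document; each statement's English description precedes it below -/
import Mathlib

section
/- Fix an integer k ≥ 1. There exist constants c_k > 0 and C_k > 0 such that the following holds for every ε ∈ (0, c_k) and every integer N ≥ c_k^{−1}: if P(n) = Σ_{i=0}^{k} α_i·binom(n,i) is a polynomial with real coefficients α_0,…,α_k such that ‖P(n) − P(n')‖_{ℝ/ℤ} ≤ ε for all n, n' ∈ [N], then ‖P‖_{C^∞[N]} ≤ C_k · ε. -/
open Finset

noncomputable def rzHom : ℝ →+ UnitAddCircle := QuotientAddGroup.mk' _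

lemma coe_int_shift (x : ℝ) (m : ℤ) : ((x + m : ℝ) : UnitAddCircle) = (x : UnitAddCircle) := by
  have h0 : ((m : ℝ) : UnitAddCircle) = 0 := by
    rw [AddCircle.coe_eq_zero_iff]; exact ⟨m, by simp⟩
  calc ((x + m : ℝ) : UnitAddCircle) = (x : UnitAddCircle) + ((m:ℝ) : UnitAddCircle) :=
        map_add rzHom x m
  _ = (x : UnitAddCircle) := by rw [h0, add_zero]

lemma norm_coe_eq_abs (x : ℝ) (h : |x| ≤ 1/2) : ‖(x : UnitAddCircle)‖ = |x| := by
  rw [AddCircle.norm_coe_eq_abs_iff (1:ℝ) one_ne_zero]; simpa using h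

lemma vinog (t δ : ℝ) (M : ℕ) (hM : 1 ≤ M) (hδ : δ < 1/4) (ht : |t| ≤ 1/2)
    (hh : ∀ h : ℕ, 1 ≤ h → h ≤ M → ‖((t * h : ℝ) : UnitAddCircle)‖ ≤ δ) :
    |t| * M ≤ 2 * δ := by
  have ht1 : |t| ≤ δ := by
    have := hh 1 le_rfl hM
    rwa [Nat.cast_one, mul_one, norm_coe_eq_abs t ht] at this
  have key : ∀ h : ℕ, 1 ≤ h → h ≤ M → |t| * h ≤ 2*δ := by
    intro h
    induction h with
    | zero => omega
    | succ n ih =>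
      intro _ hle
      by_cases hn : n = 0
      · subst hn; push_cast
        have := abs_nonneg t
        linarith
      · have hn1 : 1 ≤ n := by omega
        have h2 : |t| * n ≤ 2*δ := ih hn1 (by omega)
        have habs : |t * n| ≤ 1/2 := by
          rw [abs_mul, Nat.abs_cast]; linarith
        have h3 : |t| * n ≤ δ := by
          have := hh n hn1 (by omega)
          rwa [norm_coe_eq_abs _ habs, abs_mul, Nat.abs_cast] at this
        push_cast
        have : (0:ℝ) ≤ n := Nat.cast_nonneg n
        nlinarith
  exact key M hM le_rfl

lemma geom_aux : ∀ (b a : ℕ), a ≤ b → 2 * (∑ j ∈ Ioc a b, (3:ℝ)^(b+1-j)) + 3 ≤ 3^(b+1-a) := by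
  intro b
  induction b with
  | zero => intro a ha; interval_cases a; simp
  | succ b ih =>
    intro a ha
    rcases eq_or_lt_of_le ha with rfl | ha'
    · simp
    · have ha2 : a ≤ b := by omega
      have hins : Ioc a (b+1) = insert (b+1) (Ioc a b) := by
        ext x; simp only [mem_Ioc, mem_insert]; omega
      rw [hins, Finset.sum_insert (by simp)]
      have e1 : ∀ j ∈ Ioc a b, (3:ℝ)^(b+1+1-j) = 3 * 3^(b+1-j) := by
        intro j hj
        rw [mem_Ioc] at hj
        have : b+1+1-j = (b+1-j)+1 := by omega
        rw [this, pow_succ]; ring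
      rw [Finset.sum_congr rfl e1]
      have hS := ih a ha2
      have : b+1+1-a = (b+1-a)+1 := by omega
      rw [this, pow_succ]
      have hbb : b+1+1-(b+1) = 1 := by omega
      rw [hbb, pow_one]
      rw [← Finset.mul_sum]
      nlinarith [hS]

lemma diff_identity (k h n : ℕ) (β : ℕ → ℝ) :
    (∑ i ∈ range (k+2), β i * ((n+h).choose i : ℝ)) - (∑ i ∈ range (k+2), β i * (n.choose i : ℝ))
    = ∑ p ∈ range (k+2), (∑ j ∈ Ioc p (k+1), β j * ((h.choose (j-p)) : ℝ)) * (n.choose p : ℝ) := by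
  have hv : ∀ i : ℕ, ((n+h).choose i : ℝ)
      = ∑ p ∈ range (i+1), (n.choose p : ℝ) * (h.choose (i-p) : ℝ) := by
    intro i
    rw [Nat.add_choose_eq, Finset.Nat.sum_antidiagonal_eq_sum_range_succ_mk]
    push_cast
    rfl
  have e1 : (∑ i ∈ range (k+2), β i * ((n+h).choose i : ℝ))
      = ∑ i ∈ range (k+2), ∑ p ∈ range (i+1), β i * ((n.choose p:ℝ) * (h.choose (i-p):ℝ)) := by
    refine Finset.sum_congr rfl fun i _ => ?_
    rw [hv i, Finset.mul_sum]
  have e2 := Finset.sum_Ico_Ico_comm 0 (k+2)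
      (fun p i => β i * ((n.choose p:ℝ) * (h.choose (i-p):ℝ)))
  simp only [← Finset.range_eq_Ico] at e2
  rw [e1, ← e2]
  have e3 : ∀ p ∈ range (k+2),
      (∑ i ∈ Finset.Ico p (k+2), β i * ((n.choose p:ℝ) * (h.choose (i-p):ℝ)))
      = β p * (n.choose p : ℝ)
        + (∑ j ∈ Ioc p (k+1), β j * ((h.choose (j-p)) : ℝ)) * (n.choose p : ℝ) := by
    intro p hp
    rw [mem_range] at hp
    have hpk : p ≤ k+1 := by omega
    rw [show Finset.Ico p (k+2) = Finset.Icc p (k+1) from Finset.Ico_add_one_right_eq_Icc (a := p) (b := k+1), Finset.Icc_eq_cons_Ioc hpk, Finset.sum_cons]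
    rw [Nat.sub_self, Nat.choose_zero_right]
    rw [Finset.sum_mul]
    push_cast
    ring_nf
  rw [Finset.sum_congr rfl e3, Finset.sum_add_distrib]
  ring

set_option maxHeartbeats 3000000 in
lemma main_lemma (k : ℕ) : ∃ C : ℝ, 1 ≤ C ∧ ∀ ε : ℝ, 0 < ε → C * ε < 1 →
    ∀ N : ℕ, C ≤ (N:ℝ) →
    ∀ β : ℕ → ℝ,
    (∀ n ∈ Icc 1 N, ∀ n' ∈ Icc 1 N,
      ‖((((∑ i ∈ range (k+1), β i * (n.choose i : ℝ)) -
          ∑ i ∈ range (k+1), β i * (n'.choose i : ℝ)) : ℝ) : UnitAddCircle)‖ ≤ ε) →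
    ∀ i, 1 ≤ i → i ≤ k → (N:ℝ)^i * ‖((β i : ℝ) : UnitAddCircle)‖ ≤ C * ε := by
  induction k with
  | zero =>
    exact ⟨1, le_rfl, fun ε _ _ N _ β _ i h1 h0 => absurd (h1.trans h0) (by norm_num)⟩
  | succ k ih =>
    obtain ⟨C0, hC01, IH⟩ := ih
    have h3k : (1:ℝ) ≤ 3^k := one_le_pow₀ (by norm_num)
    have hC1 : (1:ℝ) ≤ 100 * 3^k * C0 := by nlinarith
    refine ⟨100 * 3^k * C0, hC1, ?_⟩
    intro ε hε hCε N hNC β hyp i hi1 hik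
    have hC100 : (100:ℝ) ≤ 100 * 3^k * C0 := by nlinarith
    have hN100 : (100:ℝ) ≤ (N:ℝ) := le_trans hC100 hNC
    have hN3 : 3 ≤ N := by exact_mod_cast (by linarith : (3:ℝ) ≤ (N:ℝ))
    set M := N / 2 with hMdef
    have hM1 : 1 ≤ M := by omega
    have h2M : 2 * M ≤ N := by omega
    have hMN : N ≤ 2 * M + 1 := by omega
    have hM1' : (1:ℝ) ≤ (M:ℝ) := by exact_mod_cast hM1
    have hMR : (N:ℝ) ≤ 3 * M := by
      have h1 : (N:ℝ) ≤ 2*(M:ℝ)+1 := by exact_mod_cast hMN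
      linarith
    have hMpos : (0:ℝ) < M := by linarith
    have hMC0 : C0 ≤ (M:ℝ) := by nlinarith
    set γ : ℕ → ℕ → ℝ := fun h p => ∑ j ∈ Ioc p (k+1), β j * ((h.choose (j-p)) : ℝ) with hγdef
    set Q : ℕ → ℝ := fun m => ∑ i ∈ range (k+2), β i * (m.choose i : ℝ) with hQdef
    have id1 : ∀ h n : ℕ, Q (n+h) - Q n = ∑ p ∈ range (k+2), γ h p * (n.choose p : ℝ) :=
      fun h n => diff_identity k h n β
    have hγtop : ∀ h, γ h (k+1) = 0 := by intro h; simp [hγdef]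
    have hyp' : ∀ n ∈ Icc 1 N, ∀ n' ∈ Icc 1 N,
        ‖(((Q n - Q n') : ℝ) : UnitAddCircle)‖ ≤ ε := hyp
    have hR : ∀ h, 1 ≤ h → h ≤ M → ∀ n ∈ Icc 1 M, ∀ n' ∈ Icc 1 M,
        ‖((((∑ p ∈ range (k+1), γ h p * (n.choose p : ℝ)) -
            ∑ p ∈ range (k+1), γ h p * (n'.choose p : ℝ)) : ℝ) : UnitAddCircle)‖ ≤ 2*ε := by
      intro h hh1 hhM n hn n' hn'
      rw [mem_Icc] at hn hn'
      have expand : ∀ m : ℕ, (∑ p ∈ range (k+1), γ h p * (m.choose p : ℝ))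
          = Q (m+h) - Q m := by
        intro m
        rw [id1 h m, Finset.sum_range_succ (fun p => γ h p * (m.choose p : ℝ)) (k+1),
          hγtop, zero_mul, add_zero]
      rw [expand n, expand n']
      have hre : (Q (n+h) - Q n) - (Q (n'+h) - Q n')
          = (Q (n+h) - Q (n'+h)) - (Q n - Q n') := by ring
      rw [hre]
      rw [show (((Q (n+h) - Q (n'+h)) - (Q n - Q n') : ℝ) : UnitAddCircle)
          = (((Q (n+h) - Q (n'+h)) : ℝ) : UnitAddCircle) - (((Q n - Q n') : ℝ) : UnitAddCircle)
          from map_sub rzHom _ _]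
      refine le_trans (norm_sub_le _ _) ?_
      have b1 := hyp' (n+h) (by rw [mem_Icc]; omega) (n'+h) (by rw [mem_Icc]; omega)
      have b2 := hyp' n (by rw [mem_Icc]; omega) n' (by rw [mem_Icc]; omega)
      linarith
    have hγpos : ∀ h, 1 ≤ h → h ≤ M → ∀ p, 1 ≤ p → p ≤ k →
        ‖((γ h p : ℝ) : UnitAddCircle)‖ ≤ 2*C0*ε / (M:ℝ)^p := by
      intro h hh1 hhM p hp1 hpk
      have hC02 : C0 * (2*ε) < 1 := by nlinarith
      have hIH := IH (2*ε) (by linarith) hC02 M hMC0 (γ h) (hR h hh1 hhM) p hp1 hpk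
      have hMp : (0:ℝ) < (M:ℝ)^p := by positivity
      rw [le_div_iff₀ hMp]
      nlinarith [hIH]
    have hγ1 : ∀ h, 1 ≤ h → h ≤ M → ‖((γ h 1 : ℝ) : UnitAddCircle)‖ ≤ 2*C0*ε := by
      intro h hh1 hhM
      rcases Nat.eq_zero_or_pos k with rfl | hk1
      · have hz : γ h 1 = 0 := by simp [hγdef]
        rw [hz, show ((0:ℝ) : UnitAddCircle) = 0 from map_zero rzHom, norm_zero]
        have : (0:ℝ) ≤ C0*ε := mul_nonneg (by linarith) hε.le
        linarith
      · have := hγpos h hh1 hhM 1 le_rfl hk1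
        calc ‖((γ h 1 : ℝ) : UnitAddCircle)‖ ≤ 2*C0*ε/(M:ℝ)^1 := this
        _ ≤ 2*C0*ε := by
            rw [pow_one]
            exact div_le_self (by positivity) hM1'
    have hγ0 : ∀ h, 1 ≤ h → h ≤ M → ‖((γ h 0 : ℝ) : UnitAddCircle)‖ ≤ 3*C0*ε := by
      intro h hh1 hhM
      have hQ1 : Q (1+h) - Q 1 = γ h 0 + γ h 1 := by
        rw [id1 h 1]
        have hz : ∀ p ∈ Finset.Ico 2 (k+2), γ h p * ((Nat.choose 1 p : ℕ):ℝ) = 0 := by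
          intro p hp
          rw [mem_Ico] at hp
          rw [Nat.choose_eq_zero_of_lt (by omega)]
          simp
        rw [range_eq_Ico, ← Finset.sum_Ico_consecutive _ (by omega : 0 ≤ 2) (by omega : 2 ≤ k+2)]
        rw [Finset.sum_eq_zero hz, add_zero, ← Finset.range_eq_Ico]
        rw [Finset.sum_range_succ, Finset.sum_range_one]
        norm_num
      have hb : ‖(((γ h 0 + γ h 1) : ℝ) : UnitAddCircle)‖ ≤ ε := by
        rw [← hQ1]
        exact hyp' (1+h) (by rw [mem_Icc]; omega) 1 (by rw [mem_Icc]; omega)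
      have hsplit : ((γ h 0 : ℝ) : UnitAddCircle)
          = (((γ h 0 + γ h 1 : ℝ)) : UnitAddCircle) - ((γ h 1:ℝ):UnitAddCircle) := by
        have hms := map_sub rzHom (γ h 0 + γ h 1) (γ h 1)
        rw [show γ h 0 + γ h 1 - γ h 1 = γ h 0 by ring] at hms
        exact hms
      rw [hsplit]
      refine le_trans (norm_sub_le _ _) ?_
      have := hγ1 h hh1 hhM
      have hC0ε : (0:ℝ) ≤ C0*ε := mul_nonneg (by linarith) hε.le
      nlinarith [hb, this]
    have hdown : ∀ d : ℕ, ∀ i : ℕ, 1 ≤ i → i ≤ k+1 → i + d = k + 2 →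
        ‖((β i : ℝ) : UnitAddCircle)‖ ≤ 2 * 3^(k+2-i) * C0 * ε / (M:ℝ)^i := by
      intro d
      induction d using Nat.strong_induction_on with
      | _ d ihd =>
      intro i hi1 hik' hid
      have prev : ∀ j, i < j → j ≤ k+1 →
          ‖((β j : ℝ) : UnitAddCircle)‖ ≤ 2 * 3^(k+2-j) * C0 * ε / (M:ℝ)^j := by
        intro j hj1 hj2
        exact ihd (k+2-j) (by omega) j (by omega) hj2 (by omega)
      have hbh : ∀ h : ℕ, 1 ≤ h → h ≤ M →
          ‖((β i * h : ℝ) : UnitAddCircle)‖ ≤ 3^(k+2-i) * C0 * ε / (M:ℝ)^(i-1) := by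
        intro h hh1 hhM
        have hsplit : γ h (i-1) = β i * h + ∑ j ∈ Ioc i (k+1), β j * ((h.choose (j-i+1)) : ℝ) := by
          simp only [hγdef]
          have hIcc : Ioc (i-1) (k+1) = Icc i (k+1) := by
            ext x; simp only [mem_Ioc, mem_Icc]; omega
          rw [hIcc, Finset.Icc_eq_cons_Ioc hik', Finset.sum_cons]
          congr 1
          · rw [show i - (i-1) = 1 by omega, Nat.choose_one_right]
          · refine Finset.sum_congr rfl fun j hj => ?_
            rw [mem_Ioc] at hj
            rw [show j - (i-1) = j - i + 1 by omega]
        have hEsum : ‖((∑ j ∈ Ioc i (k+1), β j * ((h.choose (j-i+1)) : ℝ) : ℝ) : UnitAddCircle)‖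
            ≤ ∑ j ∈ Ioc i (k+1), (h.choose (j-i+1) : ℝ) * ‖((β j : ℝ) : UnitAddCircle)‖ := by
          rw [show ((∑ j ∈ Ioc i (k+1), β j * ((h.choose (j-i+1)) : ℝ) : ℝ) : UnitAddCircle)
              = ∑ j ∈ Ioc i (k+1), ((β j * ((h.choose (j-i+1)) : ℝ) : ℝ) : UnitAddCircle)
              from map_sum rzHom _ _]
          refine le_trans (norm_sum_le _ _) (Finset.sum_le_sum fun j hj => ?_)
          rw [show ((β j * ((h.choose (j-i+1)) : ℝ) : ℝ) : UnitAddCircle)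
              = (h.choose (j-i+1)) • ((β j : ℝ) : UnitAddCircle) by
            rw [mul_comm, ← nsmul_eq_mul]; exact map_nsmul rzHom _ _]
          exact norm_nsmul_le
        have hterm : ∀ j ∈ Ioc i (k+1), (h.choose (j-i+1) : ℝ) * ‖((β j : ℝ) : UnitAddCircle)‖
            ≤ (2*C0*ε/(M:ℝ)^(i-1)) * 3^(k+2-j) := by
          intro j hj
          rw [mem_Ioc] at hj
          have hc : (h.choose (j-i+1) : ℝ) ≤ (M:ℝ)^(j-i+1) := by
            calc (h.choose (j-i+1) : ℝ) ≤ ((h ^ (j-i+1) : ℕ) : ℝ) := by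
                  exact_mod_cast Nat.choose_le_pow h (j-i+1)
            _ ≤ (M:ℝ)^(j-i+1) := by
                  push_cast
                  exact pow_le_pow_left₀ (by positivity) (by exact_mod_cast hhM) _
          have hβj := prev j hj.1 hj.2
          have key : (M:ℝ)^(j-i+1) * (2 * 3^(k+2-j) * C0 * ε / (M:ℝ)^j)
              = (2*C0*ε/(M:ℝ)^(i-1)) * 3^(k+2-j) := by
            have hpow : (M:ℝ)^(j-i+1) * (M:ℝ)^(i-1) = (M:ℝ)^j := by
              rw [← pow_add]; congr 1; omega
            have hMj : ((M:ℝ)^j) ≠ 0 := by positivity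
            have hMi : ((M:ℝ)^(i-1)) ≠ 0 := by positivity
            rw [← mul_div_assoc, div_mul_eq_mul_div, div_eq_div_iff hMj hMi]
            linear_combination (2 * 3^(k+2-j) * C0 * ε) * hpow
          calc (h.choose (j-i+1) : ℝ) * ‖((β j : ℝ) : UnitAddCircle)‖
              ≤ (M:ℝ)^(j-i+1) * (2 * 3^(k+2-j) * C0 * ε / (M:ℝ)^j) := by
                apply mul_le_mul hc hβj (norm_nonneg _) (by positivity)
          _ = (2*C0*ε/(M:ℝ)^(i-1)) * 3^(k+2-j) := key
        have hgeom : 2 * (∑ j ∈ Ioc i (k+1), (3:ℝ)^(k+2-j)) + 3 ≤ 3^(k+2-i) :=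
          geom_aux (k+1) i hik'
        have hE2 : ‖((∑ j ∈ Ioc i (k+1), β j * ((h.choose (j-i+1)) : ℝ) : ℝ) : UnitAddCircle)‖
            ≤ (C0*ε/(M:ℝ)^(i-1)) * (3^(k+2-i) - 3) := by
          refine le_trans hEsum (le_trans (Finset.sum_le_sum hterm) ?_)
          rw [← Finset.mul_sum]
          have hfac : (0:ℝ) ≤ C0*ε/(M:ℝ)^(i-1) :=
            div_nonneg (mul_nonneg (by linarith) hε.le) (by positivity)
          have hprod := mul_le_mul_of_nonneg_left hgeom hfac
          have hrew : 2 * C0 * ε / (M:ℝ)^(i-1) * (∑ j ∈ Ioc i (k+1), (3:ℝ)^(k+2-j))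
              = C0*ε/(M:ℝ)^(i-1) * (2 * ∑ j ∈ Ioc i (k+1), (3:ℝ)^(k+2-j)) := by ring
          rw [hrew]
          linarith [hprod]
        have hγi : ‖((γ h (i-1) : ℝ) : UnitAddCircle)‖ ≤ 3*C0*ε/(M:ℝ)^(i-1) := by
          rcases Nat.lt_or_ge i 2 with hi2 | hi2
          · have hi1' : i - 1 = 0 := by omega
            rw [hi1', pow_zero, div_one]
            exact hγ0 h hh1 hhM
          · have hb := hγpos h hh1 hhM (i-1) (by omega) (by omega)
            have h23 : 2*C0*ε/(M:ℝ)^(i-1) ≤ 3*C0*ε/(M:ℝ)^(i-1) := by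
              gcongr
              nlinarith [mul_nonneg (show (0:ℝ) ≤ C0 by linarith) hε.le]
            linarith
        have hco : ((β i * h : ℝ) : UnitAddCircle)
            = ((γ h (i-1) : ℝ) : UnitAddCircle)
              - ((∑ j ∈ Ioc i (k+1), β j * ((h.choose (j-i+1)) : ℝ) : ℝ) : UnitAddCircle) := by
          rw [show (β i * (h:ℝ))
              = γ h (i-1) - ∑ j ∈ Ioc i (k+1), β j * ((h.choose (j-i+1)) : ℝ) by
            rw [hsplit]; ring]
          exact map_sub rzHom _ _
        rw [hco]
        refine le_trans (norm_sub_le _ _) ?_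
        have hPpos : (0:ℝ) < (M:ℝ)^(i-1) := by positivity
        have hPne : ((M:ℝ)^(i-1)) ≠ 0 := ne_of_gt hPpos
        have heq : 3*C0*ε/(M:ℝ)^(i-1) + (C0*ε/(M:ℝ)^(i-1)) * (3^(k+2-i) - 3)
            = 3^(k+2-i)*C0*ε/(M:ℝ)^(i-1) := by
          field_simp
          ring
        linarith [hγi, hE2]
      have htabs : |β i - round (β i)| ≤ 1/2 := abs_sub_round (β i)
      have hnormt : ∀ h : ℕ, (((β i - round (β i)) * h : ℝ) : UnitAddCircle)
          = ((β i * h : ℝ) : UnitAddCircle) := by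
        intro h
        rw [show ((β i - round (β i)) * (h:ℝ)) = β i * h + ((-(round (β i) * h) : ℤ) : ℝ) by
          push_cast; ring]
        exact coe_int_shift _ _
      have hMp1 : (1:ℝ) ≤ (M:ℝ)^(i-1) := one_le_pow₀ hM1'
      have hδlt : 3^(k+2-i)*C0*ε/(M:ℝ)^(i-1) < 1/4 := by
        have hexp : (3:ℝ)^(k+2-i) ≤ 3^(k+1) := pow_le_pow_right₀ (by norm_num) (by omega)
        have h1 : 3^(k+2-i)*C0*ε/(M:ℝ)^(i-1) ≤ 3^(k+2-i)*C0*ε :=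
          div_le_self (by positivity) hMp1
        have h2 : (3:ℝ)^(k+2-i)*C0*ε ≤ 3^(k+1)*(C0*ε) := by
          have hcc : (0:ℝ) ≤ C0*ε := mul_nonneg (by linarith) hε.le
          nlinarith [mul_le_mul_of_nonneg_right hexp hcc]
        have h4 : (3:ℝ)^(k+1)*(C0*ε) = 3*(3^k*C0*ε) := by rw [pow_succ]; ring
        have h5 : 100*(3^k*C0*ε) < 1 := by linarith [hCε]
        linarith
      have hvin := vinog (β i - round (β i)) _ M hM1 hδlt htabs
        (fun h h1 h2 => by rw [hnormt]; exact hbh h h1 h2)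
      have hbeq : ‖((β i : ℝ) : UnitAddCircle)‖ = |β i - round (β i)| := UnitAddCircle.norm_eq
      rw [hbeq, le_div_iff₀ (by positivity : (0:ℝ) < (M:ℝ)^i)]
      have hpowM : (M:ℝ)^(i-1) * (M:ℝ) = (M:ℝ)^i := by
        rw [← pow_succ]
        congr 1
        omega
      have hq : 3^(k+2-i)*C0*ε/(M:ℝ)^(i-1) * (M:ℝ)^(i-1) = 3^(k+2-i)*C0*ε :=
        div_mul_cancel₀ _ (by positivity)
      calc |β i - round (β i)| * (M:ℝ)^i
          = (|β i - round (β i)| * (M:ℝ)) * (M:ℝ)^(i-1) := by rw [← hpowM]; ring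
      _ ≤ (2 * (3^(k+2-i)*C0*ε/(M:ℝ)^(i-1))) * (M:ℝ)^(i-1) :=
          mul_le_mul_of_nonneg_right hvin (by positivity)
      _ = 2 * 3^(k+2-i) * C0 * ε := by rw [mul_assoc, hq]; ring
    have hb := hdown (k+2-i) i hi1 hik (by omega)
    have hnn : (0:ℝ) ≤ ‖((β i : ℝ):UnitAddCircle)‖ := norm_nonneg _
    have hNpow : (N:ℝ)^i ≤ (3*(M:ℝ))^i := pow_le_pow_left₀ (Nat.cast_nonneg N) hMR i
    have hMip : (0:ℝ) < (M:ℝ)^i := by positivity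
    have h3i : (3:ℝ)^i * 3^(k+2-i) = 3^(k+2) := by
      rw [← pow_add]
      congr 1
      omega
    calc (N:ℝ)^i * ‖((β i : ℝ):UnitAddCircle)‖
        ≤ (3*(M:ℝ))^i * ‖((β i : ℝ):UnitAddCircle)‖ := mul_le_mul_of_nonneg_right hNpow hnn
    _ ≤ (3*(M:ℝ))^i * (2 * 3^(k+2-i) * C0 * ε / (M:ℝ)^i) :=
        mul_le_mul_of_nonneg_left hb (by positivity)
    _ = (3:ℝ)^i * (2 * 3^(k+2-i) * C0 * ε) * ((M:ℝ)^i/(M:ℝ)^i) := by rw [mul_pow]; ring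
    _ = 2 * 3^(k+2) * C0 * ε := by rw [div_self (ne_of_gt hMip), mul_one, ← h3i]; ring
    _ ≤ 100 * 3^k * C0 * ε := by
      have h9 : (3:ℝ)^(k+2) = 9 * 3^k := by rw [pow_add]; ring
      rw [h9]
      nlinarith [mul_nonneg (mul_nonneg (show (0:ℝ) ≤ 3^k by positivity)
        (show (0:ℝ) ≤ C0 by linarith)) hε.le]

/-- **Polynomials nearly constant mod 1 have small smoothness norm (Lemma 2.3).**
Fix `k ≥ 1`. There exist `c, C > 0` such that for every `ε ∈ (0, c)` and every integer
`N ≥ c⁻¹`: if `P(n) = Σ_{i=0}^k α_i · binom(n, i)` satisfies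
`‖P(n) − P(n')‖_{ℝ/ℤ} ≤ ε` for all `n, n' ∈ [N]`, then
`‖P‖_{C^∞[N]} = max_{1 ≤ i ≤ k} N^i · ‖α_i‖_{ℝ/ℤ} ≤ C · ε`. -/
theorem smoothness_norm_of_small_fractional_parts (k : ℕ) (hk : 1 ≤ k) :
    ∃ c C : ℝ, 0 < c ∧ 0 < C ∧
      ∀ ε : ℝ, 0 < ε → ε < c →
        ∀ N : ℕ, c⁻¹ ≤ (N : ℝ) →
          ∀ α : ℕ → ℝ,
            (∀ n ∈ Finset.Icc 1 N, ∀ n' ∈ Finset.Icc 1 N,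
              |((∑ i ∈ Finset.range (k + 1), α i * (n.choose i : ℝ)) -
                  (∑ i ∈ Finset.range (k + 1), α i * (n'.choose i : ℝ))) -
                round ((∑ i ∈ Finset.range (k + 1), α i * (n.choose i : ℝ)) -
                  (∑ i ∈ Finset.range (k + 1), α i * (n'.choose i : ℝ)))| ≤ ε) →
            ∀ i : ℕ, 1 ≤ i → i ≤ k →
              (N : ℝ) ^ i * |α i - round (α i)| ≤ C * ε := by
  obtain ⟨C, hC1, H⟩ := main_lemma k
  have hC0 : (0:ℝ) < C := by linarith
  refine ⟨C⁻¹, C, by positivity, hC0, ?_⟩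
  intro ε hε hεc N hN α hyp i hi1 hik
  have hCε : C * ε < 1 := by
    have := mul_lt_mul_of_pos_left hεc hC0
    rwa [mul_inv_cancel₀ (ne_of_gt hC0)] at this
  have hNC : C ≤ (N:ℝ) := by rwa [inv_inv] at hN
  have hyp' : ∀ n ∈ Finset.Icc 1 N, ∀ n' ∈ Finset.Icc 1 N,
      ‖((((∑ i ∈ range (k+1), α i * (n.choose i : ℝ)) -
          ∑ i ∈ range (k+1), α i * (n'.choose i : ℝ)) : ℝ) : UnitAddCircle)‖ ≤ ε := by
    intro n hn n' hn'
    rw [UnitAddCircle.norm_eq]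
    exact hyp n hn n' hn'
  have hfin := H ε hε hCε N hNC α hyp' i hi1 hik
  rwa [UnitAddCircle.norm_eq] at hfin
end

section
/- There exists an absolute constant C > 0 such that the following holds: for every integer N ≥ 1, every function g : [N] → ℝ, and every integer K ≥ 1, there exists t ∈ [0, 1/K) such that the factor B_{g−t,K} is C-regular, i.e., sup_{r>0} (1/(2r))·(1/N)·|{x ∈ [N] : ‖K·(g(x) − t)‖_{ℝ/ℤ} ≤ r}| ≤ C. -/
open Set Metric MeasureTheory

/-- Finite Hardy–Littlewood-type maximal lemma: for any finite family of real points,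
there is a `θ ∈ [0,1)` such that every interval `[θ-r, θ+r]` contains at most
`20 r |s|` of the points. -/
lemma exists_good_theta {ι : Type*} [DecidableEq ι] (s : Finset ι) (y : ι → ℝ) :
    ∃ θ ∈ Set.Ico (0 : ℝ) 1, ∀ r : ℝ, 0 < r →
      ((s.filter fun i => |y i - θ| ≤ r).card : ℝ) ≤ 20 * r * s.card := by
  classical
  set M : ℝ := (s.card : ℝ) with hM
  have hM0 : 0 ≤ M := Nat.cast_nonneg _
  set Bad : Set ℝ := {θ | ∃ r : ℝ, 0 < r ∧ r ≤ 1 / 20 ∧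
      20 * r * M < ((s.filter fun i => |y i - θ| ≤ r).card : ℝ)} with hBad
  -- it suffices to find a point of `[0,1)` not in `Bad`
  suffices h : ∃ θ ∈ Set.Ico (0 : ℝ) 1, θ ∉ Bad by
    obtain ⟨θ, hθ, hθn⟩ := h
    refine ⟨θ, hθ, fun r hr => ?_⟩
    rcases le_or_gt r (1 / 20) with h1 | h1
    · by_contra hcon
      exact hθn ⟨r, hr, h1, lt_of_not_ge hcon⟩
    · calc ((s.filter fun i => |y i - θ| ≤ r).card : ℝ) ≤ M := by
            exact_mod_cast Nat.cast_le.mpr (Finset.card_filter_le _ _)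
        _ ≤ 20 * r * M := by nlinarith
  by_contra hcon
  push_neg at hcon
  have hsub : Set.Ico (0 : ℝ) 1 ⊆ Bad := hcon
  -- choose a witness radius for each bad point
  have hrad : ∀ θ : ℝ, ∃ ρ : ℝ, θ ∈ Bad →
      0 < ρ ∧ ρ ≤ 1 / 20 ∧ 20 * ρ * M < ((s.filter fun i => |y i - θ| ≤ ρ).card : ℝ) := by
    intro θ
    by_cases h : θ ∈ Bad
    · obtain ⟨r, h1, h2, h3⟩ := h
      exact ⟨r, fun _ => ⟨h1, h2, h3⟩⟩
    · exact ⟨1, fun h' => absurd h' h⟩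
  choose rad hradspec using hrad
  -- Vitali covering lemma
  obtain ⟨u, hu_sub, hdisj, hcov⟩ :=
    Vitali.exists_disjoint_subfamily_covering_enlargement_closedBall Bad id rad (1 / 20)
      (fun a ha => (hradspec a ha).2.1) 4 (by norm_num)
  set F : ℝ → Finset ι := fun b => s.filter fun i => |y i - b| ≤ rad b with hF
  have hFne : ∀ b ∈ u, (F b).Nonempty := by
    intro b hb
    obtain ⟨h1, _, h3⟩ := hradspec b (hu_sub hb)
    have h3' : 20 * rad b * M < ((F b).card : ℝ) := h3
    have h0 : (0 : ℝ) ≤ 20 * rad b * M := mul_nonneg (by nlinarith) hM0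
    have : (0 : ℝ) < ((F b).card : ℝ) := lt_of_le_of_lt h0 h3'
    exact Finset.card_pos.mp (by exact_mod_cast this)
  have hball : ∀ (b : ℝ) (i : ι), i ∈ F b → y i ∈ closedBall (id b) (rad b) := by
    intro b i hi
    rw [id, mem_closedBall, Real.dist_eq]
    exact (Finset.mem_filter.mp hi).2
  -- u is finite
  have hFinj : Set.InjOn F u := by
    intro a ha b hb hab
    by_contra hne
    have hd := hdisj ha hb hne
    obtain ⟨i, hi⟩ := hFne a ha
    have hi' : i ∈ F b := hab ▸ hi
    exact Set.disjoint_left.mp hd (hball a i hi) (hball b i hi')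
  have hufin : u.Finite := by
    have himg : (F '' u).Finite := (s.powerset : Finset (Finset ι)).finite_toSet.subset
      (by rintro _ ⟨b, hb, rfl⟩
          simp only [Finset.mem_coe, Finset.mem_powerset]
          exact Finset.filter_subset _ _)
    exact Set.Finite.of_finite_image himg hFinj
  set U : Finset ℝ := hufin.toFinset with hU
  have hUmem : ∀ {b}, b ∈ U ↔ b ∈ u := by intro b; simp [hU]
  -- sum of counts is at most M
  have hdisjU : ∀ a ∈ U, ∀ b ∈ U, a ≠ b → Disjoint (F a) (F b) := by
    intro a ha b hb hne
    have hd := hdisj (hUmem.mp ha) (hUmem.mp hb) hne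
    rw [Finset.disjoint_left]
    intro i hia hib
    exact Set.disjoint_left.mp hd (hball a i hia) (hball b i hib)
  have hsumcard : (∑ b ∈ U, ((F b).card : ℝ)) ≤ M := by
    have hcb := Finset.card_biUnion hdisjU
    have hsubs : U.biUnion F ⊆ s := by
      intro i hi
      simp only [Finset.mem_biUnion] at hi
      obtain ⟨b, _, hb⟩ := hi
      exact Finset.mem_filter.mp hb |>.1
    have hle : (U.biUnion F).card ≤ s.card := Finset.card_le_card hsubs
    rw [hcb] at hle
    rw [hM]
    exact_mod_cast hle
  -- sum of radii
  have hradsum : (∑ b ∈ U, rad b) ≤ 1 / 20 := by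
    obtain ⟨b0, hb0⟩ : ∃ b, b ∈ U := by
      have h0 : (0 : ℝ) ∈ Bad := hsub (by norm_num)
      obtain ⟨b, hb, _⟩ := hcov 0 h0
      exact ⟨b, hUmem.mpr hb⟩
    have hM1 : 1 ≤ M := by
      obtain ⟨i, hi⟩ := hFne b0 (hUmem.mp hb0)
      have : i ∈ s := (Finset.mem_filter.mp hi).1
      have h1c : 1 ≤ s.card := Finset.card_pos.mpr ⟨i, this⟩
      rw [hM]
      exact_mod_cast h1c
    have hsum2 : 20 * M * (∑ b ∈ U, rad b) ≤ M := by
      have hs : ∑ b ∈ U, 20 * rad b * M ≤ ∑ b ∈ U, ((F b).card : ℝ) := by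
        apply Finset.sum_le_sum
        intro b hb
        exact le_of_lt ((hradspec b (hu_sub (hUmem.mp hb))).2.2)
      calc 20 * M * (∑ b ∈ U, rad b) = ∑ b ∈ U, 20 * rad b * M := by
            rw [Finset.mul_sum]; apply Finset.sum_congr rfl; intro b _; ring
        _ ≤ ∑ b ∈ U, ((F b).card : ℝ) := hs
        _ ≤ M := hsumcard
    nlinarith
  -- measure estimate
  have hcover : Set.Ico (0 : ℝ) 1 ⊆ ⋃ b ∈ U, closedBall b (4 * rad b) := by
    intro θ hθ
    obtain ⟨b, hb, hbsub⟩ := hcov θ (hsub hθ)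
    have hθmem : θ ∈ closedBall (id θ) (rad θ) :=
      mem_closedBall_self (le_of_lt (hradspec θ (hsub hθ)).1)
    exact Set.mem_biUnion (hUmem.mpr hb) (hbsub hθmem)
  have hvol : (volume (Set.Ico (0 : ℝ) 1)) ≤ ENNReal.ofReal (8 * (1 / 20)) := by
    calc volume (Set.Ico (0 : ℝ) 1) ≤ volume (⋃ b ∈ U, closedBall b (4 * rad b)) :=
          measure_mono hcover
      _ ≤ ∑ b ∈ U, volume (closedBall b (4 * rad b)) := measure_biUnion_finset_le U _
      _ = ∑ b ∈ U, ENNReal.ofReal (2 * (4 * rad b)) := by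
          apply Finset.sum_congr rfl; intro b _; exact Real.volume_closedBall b _
      _ = ENNReal.ofReal (∑ b ∈ U, 2 * (4 * rad b)) := by
          rw [ENNReal.ofReal_sum_of_nonneg]
          intro b hb
          have := (hradspec b (hu_sub (hUmem.mp hb))).1
          linarith
      _ ≤ ENNReal.ofReal (8 * (1 / 20)) := by
          apply ENNReal.ofReal_le_ofReal
          calc (∑ b ∈ U, 2 * (4 * rad b)) = 8 * ∑ b ∈ U, rad b := by
                rw [Finset.mul_sum]; apply Finset.sum_congr rfl; intro b _; ring
            _ ≤ 8 * (1 / 20) := by linarith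
  rw [Real.volume_Ico] at hvol
  rw [ENNReal.ofReal_le_ofReal_iff (by norm_num)] at hvol
  norm_num at hvol

/-- **Existence of regular factors (Fact 3.7).**
There is an absolute constant `C > 0` such that for every `N ≥ 1`, every `g : [N] → ℝ`,
and every resolution `K ≥ 1`, there is a shift `t ∈ [0, 1/K)` making the factor
`B_{g−t,K}` `C`-regular: for every `r > 0`,
`(1/(2r)) · (1/N) · |{x ∈ [N] : ‖K·(g(x)−t)‖_{ℝ/ℤ} ≤ r}| ≤ C`, where
`‖x‖_{ℝ/ℤ} = |x - round x|` is the distance to the nearest integer. -/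
theorem exists_regular_shift :
    ∃ C : ℝ, 0 < C ∧
      ∀ N : ℕ, 1 ≤ N → ∀ g : ℕ → ℝ, ∀ K : ℕ, 1 ≤ K →
        ∃ t : ℝ, t ∈ Set.Ico (0 : ℝ) (1 / (K : ℝ)) ∧
          ∀ r : ℝ, 0 < r →
            (1 / (2 * r)) * (1 / (N : ℝ)) *
              (((Finset.Icc 1 N).filter
                (fun x => |(K : ℝ) * (g x - t) -
                  round ((K : ℝ) * (g x - t))| ≤ r)).card : ℝ) ≤ C := by
  classical
  refine ⟨30, by norm_num, fun N hN g K hK => ?_⟩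
  have hK0 : (0 : ℝ) < K := by exact_mod_cast hK
  set a : ℕ → ℝ := fun x => (K : ℝ) * g x with ha
  obtain ⟨θ, ⟨hθ0, hθ1⟩, hgood⟩ := exists_good_theta
    ((Finset.Icc 1 N) ×ˢ (Finset.Icc (-1 : ℤ) 1))
    (fun p => Int.fract (a p.1) + (p.2 : ℝ))
  refine ⟨θ / K, ⟨div_nonneg hθ0 (le_of_lt hK0), by
    rw [div_lt_div_iff₀ hK0 hK0]; nlinarith⟩, fun r hr => ?_⟩
  have hsub : ∀ x : ℕ, (K : ℝ) * (g x - θ / K) = a x - θ := by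
    intro x; field_simp; ring
  -- injection into the product-set count
  have hcard : (((Finset.Icc 1 N).filter
      (fun x => |(K : ℝ) * (g x - θ / K) - round ((K : ℝ) * (g x - θ / K))| ≤ r)).card)
      ≤ ((((Finset.Icc 1 N) ×ˢ (Finset.Icc (-1 : ℤ) 1)).filter
        (fun p => |Int.fract (a p.1) + (p.2 : ℝ) - θ| ≤ r)).card) := by
    apply Finset.card_le_card_of_injOn (fun x => (x, -round (Int.fract (a x) - θ)))
    · intro x hx
      rw [Finset.mem_coe, Finset.mem_filter] at hx
      rw [Finset.mem_coe, Finset.mem_filter]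
      obtain ⟨hx1, hx2⟩ := hx
      rw [hsub] at hx2
      have hfr0 : 0 ≤ Int.fract (a x) := Int.fract_nonneg _
      have hfr1 : Int.fract (a x) < 1 := Int.fract_lt_one _
      set v : ℝ := Int.fract (a x) - θ with hv
      have hvabs : |v| < 1 := by rw [abs_lt]; constructor <;> nlinarith
      have hround : |(round v : ℝ)| < 3 / 2 := by
        have h := abs_sub_round v
        have h2 : |(round v : ℝ)| ≤ |v| + |v - round v| := by
          calc |(round v : ℝ)| = |v - (v - round v)| := by
                rw [show v - (v - (round v : ℝ)) = (round v : ℝ) by ring]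
            _ ≤ |v| + |v - round v| := abs_sub _ _
        linarith
      constructor
      · rw [Finset.mem_product]
        refine ⟨hx1, ?_⟩
        rw [Finset.mem_Icc]
        have h2 : |round v| < 2 := by
          have hcast : ((|round v| : ℤ) : ℝ) < 2 := by
            rw [Int.cast_abs]; linarith
          exact_mod_cast hcast
        rw [abs_lt] at h2
        show -1 ≤ -round v ∧ -round v ≤ 1
        omega
      · have key : Int.fract (a x) + -((round v : ℤ) : ℝ) - θ
            = (a x - θ) - round (a x - θ) := by
          have h1 : a x - θ = v + (⌊a x⌋ : ℤ) := by
            rw [hv, Int.fract]; push_cast; ring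
          rw [h1, round_add_intCast]
          push_cast
          rw [hv]
          ring
        show |Int.fract (a x) + ((-(round v) : ℤ) : ℝ) - θ| ≤ r
        push_cast
        rw [key]
        exact hx2
    · intro x hx y hy hxy
      exact congrArg Prod.fst hxy
  have hbound := hgood r hr
  have hprod : ((Finset.Icc 1 N ×ˢ Finset.Icc (-1 : ℤ) 1).card : ℝ) = (N : ℝ) * 3 := by
    rw [Finset.card_product, Nat.card_Icc, Int.card_Icc]
    norm_num
    left
    norm_num [show Int.toNat 3 = 3 from rfl]
  rw [hprod] at hbound
  have hN0 : (0 : ℝ) < N := by exact_mod_cast hN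
  have hcardR : (((Finset.Icc 1 N).filter
      (fun x => |(K : ℝ) * (g x - θ / K) - round ((K : ℝ) * (g x - θ / K))| ≤ r)).card : ℝ)
      ≤ 20 * r * ((N : ℝ) * 3) := by
    refine le_trans ?_ hbound
    exact_mod_cast hcard
  have hpos : (0 : ℝ) ≤ (1 / (2 * r)) * (1 / (N : ℝ)) := by positivity
  calc (1 / (2 * r)) * (1 / (N : ℝ)) * (((Finset.Icc 1 N).filter
        (fun x => |(K : ℝ) * (g x - θ / K) - round ((K : ℝ) * (g x - θ / K))| ≤ r)).card : ℝ)
      ≤ (1 / (2 * r)) * (1 / (N : ℝ)) * (20 * r * ((N : ℝ) * 3)) :=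
        mul_le_mul_of_nonneg_left hcardR hpos
    _ = 30 := by field_simp; ring
end

section
/- Let N ≥ 1 be an integer, let B and C be factors (partitions) of [N], let B' = B ∨ C be their join, and let f : [N] → ℝ. Then ‖Π_C(f − Π_B f)‖_{L¹[N]} ≤ (‖Π_{B'} f‖²_{L²[N]} − ‖Π_B f‖²_{L²[N]})^{1/2}; in particular ‖Π_{B'} f‖²_{L²[N]} ≥ ‖Π_B f‖²_{L²[N]}. -/
private lemma part_swap (T : Finset ℕ) (P : ℕ → Finset ℕ)
    (h1 : ∀ x ∈ T, x ∈ P x) (h2 : ∀ x ∈ T, P x ⊆ T)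
    (h3 : ∀ x ∈ T, ∀ y ∈ P x, P y = P x) (F : ℕ → ℕ → ℝ) :
    ∑ x ∈ T, ∑ y ∈ P x, F x y = ∑ y ∈ T, ∑ x ∈ P y, F x y := by
  have e : ∀ (G : ℕ → ℕ → ℝ) (x), x ∈ T →
      ∑ y ∈ P x, G x y = ∑ y ∈ T, if y ∈ P x then G x y else 0 := by
    intro G x hx
    rw [Finset.sum_ite_mem, Finset.inter_eq_right.mpr (h2 x hx)]
  calc ∑ x ∈ T, ∑ y ∈ P x, F x y
      = ∑ x ∈ T, ∑ y ∈ T, if y ∈ P x then F x y else 0 :=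
        Finset.sum_congr rfl fun x hx => e _ x hx
    _ = ∑ y ∈ T, ∑ x ∈ T, if y ∈ P x then F x y else 0 := Finset.sum_comm
    _ = ∑ y ∈ T, ∑ x ∈ T, if x ∈ P y then F x y else 0 := by
        refine Finset.sum_congr rfl fun y hy => Finset.sum_congr rfl fun x hx => ?_
        congr 1
        simp only [eq_iff_iff]
        constructor
        · intro h; rw [h3 x hx y h]; exact h1 x hx
        · intro h; rw [h3 y hy x h]; exact h1 y hy
    _ = ∑ y ∈ T, ∑ x ∈ P y, F x y :=
        (Finset.sum_congr rfl fun y hy => e (fun y x => F x y) y hy).symm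

private lemma part_sum_eq (T : Finset ℕ) (P : ℕ → Finset ℕ)
    (h1 : ∀ x ∈ T, x ∈ P x) (h2 : ∀ x ∈ T, P x ⊆ T)
    (h3 : ∀ x ∈ T, ∀ y ∈ P x, P y = P x) (g : ℕ → ℝ) :
    ∑ x ∈ T, ((P x).card : ℝ)⁻¹ * ∑ y ∈ P x, g y = ∑ x ∈ T, g x := by
  calc ∑ x ∈ T, ((P x).card : ℝ)⁻¹ * ∑ y ∈ P x, g y
      = ∑ x ∈ T, ∑ y ∈ P x, ((P x).card : ℝ)⁻¹ * g y := by
        simp [Finset.mul_sum]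
    _ = ∑ y ∈ T, ∑ x ∈ P y, ((P x).card : ℝ)⁻¹ * g y := part_swap T P h1 h2 h3 _
    _ = ∑ y ∈ T, g y := by
        refine Finset.sum_congr rfl fun y hy => ?_
        have hc : ((P y).card : ℝ) ≠ 0 :=
          Nat.cast_ne_zero.mpr (Finset.card_ne_zero_of_mem (h1 y hy))
        rw [Finset.sum_congr rfl (fun x hx => by rw [h3 y hy x hx] :
          ∀ x ∈ P y, ((P x).card : ℝ)⁻¹ * g y = ((P y).card : ℝ)⁻¹ * g y),
          Finset.sum_const, nsmul_eq_mul, ← mul_assoc, mul_inv_cancel₀ hc, one_mul]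

/-- **Pythagoras-type bound for projections onto factors.**
Let `B` and `C` be factors (partitions) of `[N] = {1,…,N}`, encoded by assigning to each
`x ∈ [N]` its part (`B x` is the part of `B` containing `x`, and similarly for `C`);
the join `B ∨ C` then assigns to `x` the part `B x ∩ C x`. For any `f : ℕ → ℝ`,
Pythagoras-type bound. -/
theorem projection_pythagoras (N : ℕ) (hN : 1 ≤ N) (B C : ℕ → Finset ℕ)
    (hBmem : ∀ x ∈ Finset.Icc 1 N, x ∈ B x)
    (hBsub : ∀ x ∈ Finset.Icc 1 N, B x ⊆ Finset.Icc 1 N)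
    (hBeq : ∀ x ∈ Finset.Icc 1 N, ∀ y ∈ B x, B y = B x)
    (hCmem : ∀ x ∈ Finset.Icc 1 N, x ∈ C x)
    (hCsub : ∀ x ∈ Finset.Icc 1 N, C x ⊆ Finset.Icc 1 N)
    (hCeq : ∀ x ∈ Finset.Icc 1 N, ∀ y ∈ C x, C y = C x)
    (f : ℕ → ℝ) :
    ((N : ℝ)⁻¹ * ∑ n ∈ Finset.Icc 1 N,
        |((C n).card : ℝ)⁻¹ * ∑ y ∈ C n,
          (f y - ((B y).card : ℝ)⁻¹ * ∑ z ∈ B y, f z)|)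
      ≤ Real.sqrt
          (((N : ℝ)⁻¹ * ∑ n ∈ Finset.Icc 1 N,
              (((B n ∩ C n).card : ℝ)⁻¹ * ∑ y ∈ B n ∩ C n, f y) ^ 2) -
            ((N : ℝ)⁻¹ * ∑ n ∈ Finset.Icc 1 N,
              (((B n).card : ℝ)⁻¹ * ∑ y ∈ B n, f y) ^ 2)) ∧
    ((N : ℝ)⁻¹ * ∑ n ∈ Finset.Icc 1 N,
        (((B n).card : ℝ)⁻¹ * ∑ y ∈ B n, f y) ^ 2)
      ≤ ((N : ℝ)⁻¹ * ∑ n ∈ Finset.Icc 1 N,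
          (((B n ∩ C n).card : ℝ)⁻¹ * ∑ y ∈ B n ∩ C n, f y) ^ 2) := by
  classical
  set S := Finset.Icc 1 N with hSdef
  have hN0 : (0:ℝ) < (N:ℝ) := by exact_mod_cast Nat.lt_of_lt_of_le Nat.zero_lt_one hN
  have hScard : (S.card : ℝ) = (N : ℝ) := by simp [hSdef]
  set pB : ℕ → ℝ := fun x => ((B x).card : ℝ)⁻¹ * ∑ z ∈ B x, f z with hpBdef
  set pJ : ℕ → ℝ := fun x => ((B x ∩ C x).card : ℝ)⁻¹ * ∑ y ∈ B x ∩ C x, f y with hpJdef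
  set D : ℕ → ℝ := fun x => pJ x - pB x with hDdef
  -- join partition hypotheses
  have hJmem : ∀ x ∈ S, x ∈ B x ∩ C x :=
    fun x hx => Finset.mem_inter.mpr ⟨hBmem x hx, hCmem x hx⟩
  have hJsub : ∀ x ∈ S, B x ∩ C x ⊆ S :=
    fun x hx => Finset.inter_subset_left.trans (hBsub x hx)
  have hJeq : ∀ x ∈ S, ∀ y ∈ B x ∩ C x, B y ∩ C y = B x ∩ C x := by
    intro x hx y hy
    rw [Finset.mem_inter] at hy
    rw [hBeq x hx y hy.1, hCeq x hx y hy.2]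
  have hpBc : ∀ x ∈ S, ∀ y ∈ B x, pB y = pB x := by
    intro x hx y hy; simp only [hpBdef, hBeq x hx y hy]
  -- E1 : ∑ pB^2 = ∑ pB * f
  have E1 : ∑ x ∈ S, pB x ^ 2 = ∑ x ∈ S, pB x * f x := by
    calc ∑ x ∈ S, pB x ^ 2
        = ∑ x ∈ S, ((B x).card : ℝ)⁻¹ * ∑ z ∈ B x, (pB z * f z) := by
          refine Finset.sum_congr rfl fun x hx => ?_
          have h : ∑ z ∈ B x, pB z * f z = pB x * ∑ z ∈ B x, f z := by
            rw [Finset.mul_sum]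
            exact Finset.sum_congr rfl fun z hz => by rw [hpBc x hx z hz]
          rw [h, hpBdef]; ring
      _ = ∑ x ∈ S, pB x * f x := part_sum_eq S B hBmem hBsub hBeq _
  -- E2 : ∑ pB * pJ = ∑ pB * f
  have E2 : ∑ x ∈ S, pB x * pJ x = ∑ x ∈ S, pB x * f x := by
    calc ∑ x ∈ S, pB x * pJ x
        = ∑ x ∈ S, ((B x ∩ C x).card : ℝ)⁻¹ * ∑ z ∈ B x ∩ C x, (pB z * f z) := by
          refine Finset.sum_congr rfl fun x hx => ?_
          have h : ∑ z ∈ B x ∩ C x, pB z * f z = pB x * ∑ z ∈ B x ∩ C x, f z := by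
            rw [Finset.mul_sum]
            exact Finset.sum_congr rfl fun z hz =>
              by rw [hpBc x hx z (Finset.mem_inter.mp hz).1]
          rw [h, hpJdef]; ring
      _ = ∑ x ∈ S, pB x * f x :=
          part_sum_eq S (fun x => B x ∩ C x) hJmem hJsub hJeq _
  -- Pythagoras
  have Epyth : ∑ x ∈ S, D x ^ 2 = ∑ x ∈ S, pJ x ^ 2 - ∑ x ∈ S, pB x ^ 2 := by
    have expand : ∑ x ∈ S, D x ^ 2 =
        ∑ x ∈ S, pJ x ^ 2 - 2 * ∑ x ∈ S, pB x * pJ x + ∑ x ∈ S, pB x ^ 2 := by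
      have h : ∀ x ∈ S, D x ^ 2 = pJ x ^ 2 - 2 * (pB x * pJ x) + pB x ^ 2 :=
        fun x _ => by simp only [hDdef]; ring
      rw [Finset.sum_congr rfl h, Finset.sum_add_distrib, Finset.sum_sub_distrib,
        ← Finset.mul_sum]
    rw [expand, E1, E2]; ring
  have hD2 : (0:ℝ) ≤ ∑ x ∈ S, D x ^ 2 := Finset.sum_nonneg fun x _ => sq_nonneg _
  constructor
  · -- first conjunct
    show (N : ℝ)⁻¹ * ∑ n ∈ S, |((C n).card : ℝ)⁻¹ * ∑ y ∈ C n, (f y - pB y)|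
      ≤ Real.sqrt ((N : ℝ)⁻¹ * ∑ n ∈ S, pJ n ^ 2 - (N : ℝ)⁻¹ * ∑ n ∈ S, pB n ^ 2)
    have hA : ∀ n ∈ S, ∑ y ∈ C n, pJ y = ∑ y ∈ C n, f y := by
      intro n hn
      exact part_sum_eq (C n) (fun y => B y ∩ C y)
        (fun y hy => hJmem y (hCsub n hn hy))
        (fun y hy => (hCeq n hn y hy) ▸ Finset.inter_subset_right)
        (fun y hy z hz => hJeq y (hCsub n hn hy) z hz) f
    have step1 : ∑ n ∈ S, |((C n).card : ℝ)⁻¹ * ∑ y ∈ C n, (f y - pB y)|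
        ≤ ∑ n ∈ S, |D n| := by
      calc ∑ n ∈ S, |((C n).card : ℝ)⁻¹ * ∑ y ∈ C n, (f y - pB y)|
          ≤ ∑ n ∈ S, ((C n).card : ℝ)⁻¹ * ∑ y ∈ C n, |D y| := by
            refine Finset.sum_le_sum fun n hn => ?_
            have h1 : ∑ y ∈ C n, (f y - pB y) = ∑ y ∈ C n, D y := by
              rw [Finset.sum_sub_distrib, Finset.sum_sub_distrib, ← hA n hn]
            rw [h1, abs_mul, abs_inv, Nat.abs_cast]
            exact mul_le_mul_of_nonneg_left (Finset.abs_sum_le_sum_abs _ _)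
              (by positivity)
        _ = ∑ n ∈ S, |D n| := part_sum_eq S C hCmem hCsub hCeq _
    have step2 : (N : ℝ)⁻¹ * ∑ n ∈ S, |D n|
        ≤ Real.sqrt ((N : ℝ)⁻¹ * ∑ n ∈ S, D n ^ 2) := by
      rw [Real.le_sqrt (by positivity) (by positivity)]
      have cs : (∑ n ∈ S, |D n|) ^ 2 ≤ (S.card : ℝ) * ∑ n ∈ S, |D n| ^ 2 := by
        exact_mod_cast sq_sum_le_card_mul_sum_sq (s := S) (f := fun n => |D n|)
      have : (∑ n ∈ S, |D n|) ^ 2 ≤ (N : ℝ) * ∑ n ∈ S, D n ^ 2 := by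
        simpa [hScard, sq_abs] using cs
      calc ((N : ℝ)⁻¹ * ∑ n ∈ S, |D n|) ^ 2
          = (N:ℝ)⁻¹ * (N:ℝ)⁻¹ * (∑ n ∈ S, |D n|) ^ 2 := by ring
        _ ≤ (N:ℝ)⁻¹ * (N:ℝ)⁻¹ * ((N : ℝ) * ∑ n ∈ S, D n ^ 2) := by
            exact mul_le_mul_of_nonneg_left this (by positivity)
        _ = (N : ℝ)⁻¹ * ∑ n ∈ S, D n ^ 2 := by field_simp
    have hrw : (N : ℝ)⁻¹ * ∑ n ∈ S, pJ n ^ 2 - (N : ℝ)⁻¹ * ∑ n ∈ S, pB n ^ 2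
        = (N : ℝ)⁻¹ * ∑ n ∈ S, D n ^ 2 := by rw [Epyth]; ring
    rw [hrw]
    exact le_trans (mul_le_mul_of_nonneg_left step1 (by positivity)) step2
  · show (N : ℝ)⁻¹ * ∑ n ∈ S, pB n ^ 2 ≤ (N : ℝ)⁻¹ * ∑ n ∈ S, pJ n ^ 2
    have : ∑ n ∈ S, pB n ^ 2 ≤ ∑ n ∈ S, pJ n ^ 2 := by linarith [Epyth ▸ hD2]
    exact mul_le_mul_of_nonneg_left this (by positivity)
end

section
/- Fix an integer k ≥ 2 and a constant c ∈ (0,1], and set c' = min(c,1)/(10k)^5. Let N ≥ 1, let h : [N] → [0,1] satisfy E_{n∈[N]} h(n) = δ > 0, and suppose |Λ_k(h) − Λ_k(δ·1_{[N]})| ≥ c·δ^k/2. Then (1/N)·|{n ∈ [N] : h(n) > (1+c')·δ}| ≥ c·δ^k/(20k). -/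
open Finset

/-- The `k`-term arithmetic progression counting operator with a single real function:
`Λ_k(f) = E_{x,y ∈ {0,…,N}} ∏_{j=1}^k f(x + (j−1)y)`, where `f : ℕ → ℝ` represents a
function on `[N] = {1,…,N}` extended by `0` outside `[N]`. -/
noncomputable def lambdaR (k N : ℕ) (f : ℕ → ℝ) : ℝ :=
  (((N : ℝ) + 1) ^ 2)⁻¹ *
    ∑ x ∈ Finset.range (N + 1), ∑ y ∈ Finset.range (N + 1),
      ∏ j : Fin k,
        (if x + (j : ℕ) * y ∈ Finset.Icc 1 N then f (x + (j : ℕ) * y) else 0)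

private lemma abs_prod_sub_prod_le {ι : Type*} [DecidableEq ι] (s : Finset ι)
    (F G : ι → ℝ) (M : ℝ) (hM : 0 ≤ M) :
    (∀ i ∈ s, |F i| ≤ M) → (∀ i ∈ s, |G i| ≤ M) →
    |∏ i ∈ s, F i - ∏ i ∈ s, G i| ≤ ∑ i ∈ s, M ^ ((s.erase i).card) * |F i - G i| := by
  induction s using Finset.induction_on with
  | empty => intro _ _; simp
  | @insert a s ha ih =>
    intro hF hG
    have hFs : ∀ i ∈ s, |F i| ≤ M := fun i hi => hF i (Finset.mem_insert_of_mem hi)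
    have hGs : ∀ i ∈ s, |G i| ≤ M := fun i hi => hG i (Finset.mem_insert_of_mem hi)
    have habs : |∏ i ∈ s, F i| ≤ M ^ s.card := by
      calc |∏ i ∈ s, F i| = ∏ i ∈ s, |F i| := by rw [Finset.abs_prod]
        _ ≤ ∏ _i ∈ s, M := Finset.prod_le_prod (fun i _ => abs_nonneg _) hFs
        _ = M ^ s.card := Finset.prod_const M
    have hcard : ∀ i ∈ s, ((insert a s).erase i).card = (s.erase i).card + 1 := by
      intro i hi
      have hne : a ≠ i := fun hEq => ha (hEq ▸ hi)
      rw [Finset.erase_insert_of_ne hne]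
      exact Finset.card_insert_of_notMem (fun hmem => ha (Finset.mem_of_mem_erase hmem))
    rw [Finset.prod_insert ha, Finset.prod_insert ha, Finset.sum_insert ha,
      Finset.erase_insert ha]
    have h1 : F a * ∏ i ∈ s, F i - G a * ∏ i ∈ s, G i
        = (F a - G a) * ∏ i ∈ s, F i + G a * (∏ i ∈ s, F i - ∏ i ∈ s, G i) := by ring
    rw [h1]
    calc |(F a - G a) * ∏ i ∈ s, F i + G a * (∏ i ∈ s, F i - ∏ i ∈ s, G i)|
        ≤ |(F a - G a) * ∏ i ∈ s, F i| + |G a * (∏ i ∈ s, F i - ∏ i ∈ s, G i)| :=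
          abs_add_le _ _
      _ = |F a - G a| * |∏ i ∈ s, F i| + |G a| * |∏ i ∈ s, F i - ∏ i ∈ s, G i| := by
          rw [abs_mul, abs_mul]
      _ ≤ |F a - G a| * M ^ s.card
          + M * ∑ i ∈ s, M ^ ((s.erase i).card) * |F i - G i| := by
          refine add_le_add (mul_le_mul_of_nonneg_left habs (abs_nonneg _)) ?_
          exact mul_le_mul (hG a (Finset.mem_insert_self a s)) (ih hFs hGs)
            (abs_nonneg _) hM
      _ = M ^ s.card * |F a - G a|
          + ∑ i ∈ s, M ^ (((insert a s).erase i).card) * |F i - G i| := by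
          rw [Finset.mul_sum]
          congr 1
          · ring
          · refine Finset.sum_congr rfl fun i hi => ?_
            rw [hcard i hi, pow_succ]
            ring

private lemma sum_shift_le (N y m : ℕ) (u : ℕ → ℝ) (hu : ∀ n, 0 ≤ u n) :
    ∑ x ∈ Finset.range (N+1), (if x + m * y ∈ Finset.Icc 1 N then u (x + m * y) else 0)
      ≤ ∑ n ∈ Finset.Icc 1 N, u n := by
  classical
  rw [Finset.sum_ite, Finset.sum_const_zero, add_zero]
  set t := (Finset.range (N+1)).filter (fun x => x + m * y ∈ Finset.Icc 1 N) with ht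
  have hinj : ∀ x ∈ t, ∀ x' ∈ t, x + m * y = x' + m * y → x = x' := by
    intro x _ x' _ hEq; omega
  calc ∑ x ∈ t, u (x + m * y) = ∑ n ∈ t.image (fun x => x + m * y), u n :=
        (Finset.sum_image hinj).symm
    _ ≤ ∑ n ∈ Finset.Icc 1 N, u n := by
        apply Finset.sum_le_sum_of_subset_of_nonneg
        · intro n hn
          obtain ⟨x, hx, rfl⟩ := Finset.mem_image.mp hn
          exact (Finset.mem_filter.mp hx).2
        · intro n _ _; exact hu n


private lemma lambda_diff_le (k N : ℕ) (f g u : ℕ → ℝ) (M : ℝ) (hM : 0 ≤ M)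
    (hf : ∀ n ∈ Finset.Icc 1 N, |f n| ≤ M) (hg : ∀ n ∈ Finset.Icc 1 N, |g n| ≤ M)
    (hu : ∀ n ∈ Finset.Icc 1 N, |f n - g n| ≤ u n) (hu0 : ∀ n, 0 ≤ u n) :
    |lambdaR k N f - lambdaR k N g| ≤
      (k : ℝ) * M ^ (k - 1) * (((N : ℝ) + 1)⁻¹ * ∑ n ∈ Finset.Icc 1 N, u n) := by
  classical
  have hN1 : (0:ℝ) < (N:ℝ) + 1 := by positivity
  set S := ∑ n ∈ Finset.Icc 1 N, u n with hSdef
  have hS0 : 0 ≤ S := Finset.sum_nonneg fun n _ => hu0 n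
  have key : ∀ x y : ℕ,
      |(∏ j : Fin k, (if x + (j:ℕ) * y ∈ Finset.Icc 1 N then f (x + (j:ℕ)*y) else 0)) -
        ∏ j : Fin k, (if x + (j:ℕ) * y ∈ Finset.Icc 1 N then g (x + (j:ℕ)*y) else 0)| ≤
      M ^ (k-1) * ∑ j : Fin k, (if x + (j:ℕ)*y ∈ Finset.Icc 1 N then u (x + (j:ℕ)*y) else 0) := by
    intro x y
    have hFb : ∀ j : Fin k,
        |(if x + (j:ℕ)*y ∈ Finset.Icc 1 N then f (x + (j:ℕ)*y) else 0)| ≤ M := by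
      intro j; split
      · exact hf _ (by assumption)
      · simpa using hM
    have hGb : ∀ j : Fin k,
        |(if x + (j:ℕ)*y ∈ Finset.Icc 1 N then g (x + (j:ℕ)*y) else 0)| ≤ M := by
      intro j; split
      · exact hg _ (by assumption)
      · simpa using hM
    calc |(∏ j : Fin k, (if x + (j:ℕ) * y ∈ Finset.Icc 1 N then f (x + (j:ℕ)*y) else 0)) -
        ∏ j : Fin k, (if x + (j:ℕ) * y ∈ Finset.Icc 1 N then g (x + (j:ℕ)*y) else 0)|
        ≤ ∑ j : Fin k, M ^ ((Finset.univ.erase j).card) *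
            |(if x + (j:ℕ)*y ∈ Finset.Icc 1 N then f (x + (j:ℕ)*y) else 0)
              - (if x + (j:ℕ)*y ∈ Finset.Icc 1 N then g (x + (j:ℕ)*y) else 0)| :=
          abs_prod_sub_prod_le Finset.univ _ _ M hM (fun j _ => hFb j) (fun j _ => hGb j)
      _ ≤ ∑ j : Fin k, M ^ (k-1) *
            (if x + (j:ℕ)*y ∈ Finset.Icc 1 N then u (x + (j:ℕ)*y) else 0) := by
          refine Finset.sum_le_sum fun j _ => ?_
          have hc : (Finset.univ.erase j).card = k - 1 := by
            rw [Finset.card_erase_of_mem (Finset.mem_univ j), Finset.card_univ,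
              Fintype.card_fin]
          rw [hc]
          refine mul_le_mul_of_nonneg_left ?_ (pow_nonneg hM _)
          by_cases hmem : x + (j:ℕ)*y ∈ Finset.Icc 1 N
          · simp only [if_pos hmem]; exact hu _ hmem
          · simp only [if_neg hmem]; simp
      _ = M ^ (k-1) * ∑ j : Fin k,
            (if x + (j:ℕ)*y ∈ Finset.Icc 1 N then u (x + (j:ℕ)*y) else 0) := by
          rw [Finset.mul_sum]
  have expand : lambdaR k N f - lambdaR k N g
      = (((N:ℝ)+1)^2)⁻¹ * ∑ x ∈ Finset.range (N+1), ∑ y ∈ Finset.range (N+1),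
          ((∏ j : Fin k, (if x + (j:ℕ) * y ∈ Finset.Icc 1 N then f (x + (j:ℕ)*y) else 0)) -
            ∏ j : Fin k, (if x + (j:ℕ) * y ∈ Finset.Icc 1 N then g (x + (j:ℕ)*y) else 0)) := by
    unfold lambdaR
    rw [← mul_sub, ← Finset.sum_sub_distrib]
    congr 1
    refine Finset.sum_congr rfl fun x _ => ?_
    rw [← Finset.sum_sub_distrib]
  rw [expand, abs_mul, abs_of_nonneg (by positivity : (0:ℝ) ≤ (((N:ℝ)+1)^2)⁻¹)]
  have count : ∑ x ∈ Finset.range (N+1), ∑ y ∈ Finset.range (N+1), ∑ j : Fin k,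
      (if x + (j:ℕ)*y ∈ Finset.Icc 1 N then u (x + (j:ℕ)*y) else 0)
      ≤ (k:ℝ) * (((N:ℝ)+1) * S) := by
    calc ∑ x ∈ Finset.range (N+1), ∑ y ∈ Finset.range (N+1), ∑ j : Fin k,
        (if x + (j:ℕ)*y ∈ Finset.Icc 1 N then u (x + (j:ℕ)*y) else 0)
        = ∑ x ∈ Finset.range (N+1), ∑ j : Fin k, ∑ y ∈ Finset.range (N+1),
            (if x + (j:ℕ)*y ∈ Finset.Icc 1 N then u (x + (j:ℕ)*y) else 0) :=
          Finset.sum_congr rfl fun x _ => Finset.sum_comm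
      _ = ∑ j : Fin k, ∑ x ∈ Finset.range (N+1), ∑ y ∈ Finset.range (N+1),
            (if x + (j:ℕ)*y ∈ Finset.Icc 1 N then u (x + (j:ℕ)*y) else 0) :=
          Finset.sum_comm
      _ = ∑ j : Fin k, ∑ y ∈ Finset.range (N+1), ∑ x ∈ Finset.range (N+1),
            (if x + (j:ℕ)*y ∈ Finset.Icc 1 N then u (x + (j:ℕ)*y) else 0) :=
          Finset.sum_congr rfl fun j _ => Finset.sum_comm
      _ ≤ ∑ _j : Fin k, ∑ _y ∈ Finset.range (N+1), S := by
          refine Finset.sum_le_sum fun j _ => Finset.sum_le_sum fun y _ => ?_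
          exact sum_shift_le N y (j:ℕ) u hu0
      _ = (k:ℝ) * (((N:ℝ)+1) * S) := by
          simp [Finset.sum_const, Finset.card_range, Finset.card_univ, nsmul_eq_mul]
  calc (((N:ℝ)+1)^2)⁻¹ * |∑ x ∈ Finset.range (N+1), ∑ y ∈ Finset.range (N+1),
        ((∏ j : Fin k, (if x + (j:ℕ) * y ∈ Finset.Icc 1 N then f (x + (j:ℕ)*y) else 0)) -
          ∏ j : Fin k, (if x + (j:ℕ) * y ∈ Finset.Icc 1 N then g (x + (j:ℕ)*y) else 0))|
      ≤ (((N:ℝ)+1)^2)⁻¹ * (M ^ (k-1) * ((k:ℝ) * (((N:ℝ)+1) * S))) := by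
        refine mul_le_mul_of_nonneg_left ?_ (by positivity)
        calc |∑ x ∈ Finset.range (N+1), ∑ y ∈ Finset.range (N+1),
            ((∏ j : Fin k, (if x + (j:ℕ) * y ∈ Finset.Icc 1 N then f (x + (j:ℕ)*y) else 0)) -
              ∏ j : Fin k, (if x + (j:ℕ) * y ∈ Finset.Icc 1 N then g (x + (j:ℕ)*y) else 0))|
            ≤ ∑ x ∈ Finset.range (N+1), |∑ y ∈ Finset.range (N+1),
              ((∏ j : Fin k, (if x + (j:ℕ) * y ∈ Finset.Icc 1 N then f (x + (j:ℕ)*y) else 0)) -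
                ∏ j : Fin k, (if x + (j:ℕ) * y ∈ Finset.Icc 1 N then g (x + (j:ℕ)*y) else 0))| :=
              Finset.abs_sum_le_sum_abs _ _
          _ ≤ ∑ x ∈ Finset.range (N+1), ∑ y ∈ Finset.range (N+1),
              |(∏ j : Fin k, (if x + (j:ℕ) * y ∈ Finset.Icc 1 N then f (x + (j:ℕ)*y) else 0)) -
                ∏ j : Fin k, (if x + (j:ℕ) * y ∈ Finset.Icc 1 N then g (x + (j:ℕ)*y) else 0)| :=
              Finset.sum_le_sum fun x _ => Finset.abs_sum_le_sum_abs _ _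
          _ ≤ ∑ x ∈ Finset.range (N+1), ∑ y ∈ Finset.range (N+1), (M ^ (k-1) *
              ∑ j : Fin k, (if x + (j:ℕ)*y ∈ Finset.Icc 1 N then u (x + (j:ℕ)*y) else 0)) :=
              Finset.sum_le_sum fun x _ => Finset.sum_le_sum fun y _ => key x y
          _ = M ^ (k-1) * ∑ x ∈ Finset.range (N+1), ∑ y ∈ Finset.range (N+1),
              ∑ j : Fin k, (if x + (j:ℕ)*y ∈ Finset.Icc 1 N then u (x + (j:ℕ)*y) else 0) := by
              simp_rw [← Finset.mul_sum]
          _ ≤ M ^ (k-1) * ((k:ℝ) * (((N:ℝ)+1) * S)) :=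
              mul_le_mul_of_nonneg_left count (pow_nonneg hM _)
    _ = (k : ℝ) * M ^ (k - 1) * (((N : ℝ) + 1)⁻¹ * S) := by
        field_simp


private lemma pow_one_add_le (x : ℝ) (hx : 0 ≤ x) :
    ∀ m : ℕ, (m : ℝ) * x ≤ 1/2 → (1 + x) ^ m ≤ 1 + 2 * m * x := by
  intro m
  induction m with
  | zero => intro _; norm_num
  | succ n ih =>
    intro hm
    have hn : (n : ℝ) * x ≤ 1/2 := by push_cast at hm ⊢; nlinarith
    have h1 := ih hn
    have h2 : (1 + x) ^ (n + 1) = (1 + x) ^ n * (1 + x) := pow_succ _ _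
    have h3 : (1 + x) ^ n * (1 + x) ≤ (1 + 2 * n * x) * (1 + x) := by
      refine mul_le_mul_of_nonneg_right h1 (by linarith)
    push_cast
    nlinarith [hn, hx]

/-- **Large level set from Λ_k-discrepancy (crucial claim in Lemma 3.8).**
Fix `k ≥ 2` and `c ∈ (0,1]`, and set `c' = min(c,1)/(10k)^5`. If `h : [N] → [0,1]`
has mean `δ > 0` and `|Λ_k(h) − Λ_k(δ·1_{[N]})| ≥ c·δ^k/2`, then the set
`Ω' = {n ∈ [N] : h(n) > (1+c')·δ}` has density at least `c·δ^k/(20k)` in `[N]`. -/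
theorem large_level_set_of_discrepancy (k : ℕ) (hk : 2 ≤ k) (c : ℝ) (hc : 0 < c)
    (hc1 : c ≤ 1) (N : ℕ) (hN : 1 ≤ N) (h : ℕ → ℝ) (δ : ℝ)
    (hrange : ∀ n ∈ Finset.Icc 1 N, h n ∈ Set.Icc (0 : ℝ) 1)
    (hmean : (N : ℝ)⁻¹ * ∑ n ∈ Finset.Icc 1 N, h n = δ) (hδ : 0 < δ)
    (hlam : c * δ ^ k / 2 ≤ |lambdaR k N h - lambdaR k N (fun _ => δ)|) :
    c * δ ^ k / (20 * k) ≤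
      (1 / (N : ℝ)) *
        (((Finset.Icc 1 N).filter
          (fun n => (1 + min c 1 / (10 * (k : ℝ)) ^ 5) * δ < h n)).card : ℝ) := by
  classical
  have hmin : min c 1 = c := min_eq_left hc1
  set c' : ℝ := min c 1 / (10 * (k : ℝ)) ^ 5 with hc'def
  have hkR : (2:ℝ) ≤ (k:ℝ) := by exact_mod_cast hk
  have hk0 : (0:ℝ) < (k:ℝ) := by linarith
  have hNR : (0:ℝ) < (N:ℝ) := by exact_mod_cast Nat.lt_of_lt_of_le Nat.zero_lt_one hN
  have hc'eq : c' = c / (100000 * (k:ℝ)^5) := by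
    rw [hc'def, hmin]; ring_nf
  have hc'pos : 0 < c' := by rw [hc'eq]; positivity
  have hk4 : (16:ℝ) ≤ (k:ℝ)^4 := by
    calc (16:ℝ) = 2^4 := by norm_num
      _ ≤ (k:ℝ)^4 := pow_le_pow_left₀ (by norm_num) hkR 4
  have hh0 : ∀ n ∈ Finset.Icc 1 N, 0 ≤ h n := fun n hn => (hrange n hn).1
  have hh1 : ∀ n ∈ Finset.Icc 1 N, h n ≤ 1 := fun n hn => (hrange n hn).2
  have hcard : (((Finset.Icc 1 N).card : ℕ) : ℝ) = (N:ℝ) := by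
    rw [Nat.card_Icc]; push_cast; ring
  have hsum : ∑ n ∈ Finset.Icc 1 N, h n = (N:ℝ) * δ := by
    rw [← hmean]; field_simp
  have hδ1 : δ ≤ 1 := by
    have h1 : ∑ n ∈ Finset.Icc 1 N, h n ≤ ∑ _n ∈ Finset.Icc 1 N, (1:ℝ) :=
      Finset.sum_le_sum hh1
    rw [hsum, Finset.sum_const, nsmul_eq_mul, mul_one, hcard] at h1
    exact le_of_mul_le_mul_left (by linarith [h1] : (N:ℝ) * δ ≤ (N:ℝ) * 1) hNR
  -- the level set and its cardinality
  set Ω : Finset ℕ := (Finset.Icc 1 N).filter (fun n => (1 + c') * δ < h n) with hΩ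
  set W : ℝ := ((Ω.card : ℕ) : ℝ) with hW
  have hW0 : 0 ≤ W := Nat.cast_nonneg _
  -- auxiliary functions
  set g : ℕ → ℝ := fun n => min (h n) ((1 + c') * δ) with hgdef
  set u1 : ℕ → ℝ := fun n => if (1 + c') * δ < h n then (1:ℝ) else 0 with hu1def
  have hCpos : 0 < (1 + c') * δ := by positivity
  have hg0 : ∀ n ∈ Finset.Icc 1 N, 0 ≤ g n := fun n hn =>
    le_min (hh0 n hn) hCpos.le
  have hgle : ∀ n, g n ≤ (1 + c') * δ := fun n => min_le_right _ _
  have hgh : ∀ n, g n ≤ h n := fun n => min_le_left _ _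
  have hu10 : ∀ n, 0 ≤ u1 n := by
    intro n; simp only [hu1def]; split <;> norm_num
  have hhgu1 : ∀ n ∈ Finset.Icc 1 N, h n - g n ≤ u1 n := by
    intro n hn
    by_cases hx : (1 + c') * δ < h n
    · have hgn : g n = (1 + c') * δ := min_eq_right hx.le
      simp only [hu1def, if_pos hx, hgn]
      linarith [hh1 n hn, hCpos]
    · have hgn : g n = h n := min_eq_left (not_lt.mp hx)
      simp only [hu1def, if_neg hx, hgn]
      linarith
  have hsumu1 : ∑ n ∈ Finset.Icc 1 N, u1 n = W := by
    simp only [hu1def, hW, hΩ]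
    rw [Finset.sum_boole]
  have hinvle : ((N:ℝ)+1)⁻¹ ≤ (N:ℝ)⁻¹ := by
    apply inv_anti₀ hNR; linarith
  -- step 1 : |Λ h − Λ g| ≤ k * (W/N)
  have B1 : |lambdaR k N h - lambdaR k N g| ≤ (k:ℝ) * (W / (N:ℝ)) := by
    have hb := lambda_diff_le k N h g u1 1 (by norm_num)
      (fun n hn => by rw [abs_of_nonneg (hh0 n hn)]; exact hh1 n hn)
      (fun n hn => by rw [abs_of_nonneg (hg0 n hn)]; exact le_trans (hgh n) (hh1 n hn))
      (fun n hn => by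
        rw [abs_of_nonneg (by linarith [hgh n] : 0 ≤ h n - g n)]
        exact hhgu1 n hn)
      hu10
    rw [one_pow, hsumu1] at hb
    refine hb.trans ?_
    have : ((N:ℝ)+1)⁻¹ * W ≤ (N:ℝ)⁻¹ * W := mul_le_mul_of_nonneg_right hinvle hW0
    calc (k:ℝ) * 1 * (((N:ℝ)+1)⁻¹ * W) ≤ (k:ℝ) * 1 * ((N:ℝ)⁻¹ * W) :=
          mul_le_mul_of_nonneg_left this (by positivity)
      _ = (k:ℝ) * (W / (N:ℝ)) := by field_simp
  -- sum bound for |g − δ|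
  have hmax : ∑ n ∈ Finset.Icc 1 N, max (g n - δ) 0 ≤ (N:ℝ) * (c' * δ) := by
    calc ∑ n ∈ Finset.Icc 1 N, max (g n - δ) 0
        ≤ ∑ _n ∈ Finset.Icc 1 N, (c' * δ) := by
          refine Finset.sum_le_sum fun n hn => ?_
          refine max_le (by linarith [hgle n]) (by positivity)
      _ = (N:ℝ) * (c' * δ) := by
          rw [Finset.sum_const, nsmul_eq_mul, hcard]
  have hgsum : (N:ℝ) * δ - ∑ n ∈ Finset.Icc 1 N, g n ≤ W := by
    have e2 : ∑ n ∈ Finset.Icc 1 N, (h n - g n) =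
        (N:ℝ) * δ - ∑ n ∈ Finset.Icc 1 N, g n := by
      rw [Finset.sum_sub_distrib, hsum]
    have : ∑ n ∈ Finset.Icc 1 N, (h n - g n) ≤ ∑ n ∈ Finset.Icc 1 N, u1 n :=
      Finset.sum_le_sum hhgu1
    rw [e2, hsumu1] at this
    exact this
  have hsumu2 : ∑ n ∈ Finset.Icc 1 N, |g n - δ| ≤ 2 * ((N:ℝ) * (c' * δ)) + W := by
    have hid : ∀ n ∈ Finset.Icc 1 N, |g n - δ| = 2 * max (g n - δ) 0 - (g n - δ) := by
      intro n _
      rcases le_total (g n) δ with hle | hle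
      · rw [abs_of_nonpos (by linarith), max_eq_right (by linarith)]; ring
      · rw [abs_of_nonneg (by linarith), max_eq_left (by linarith)]; ring
    have e1 : ∑ n ∈ Finset.Icc 1 N, |g n - δ|
        = 2 * (∑ n ∈ Finset.Icc 1 N, max (g n - δ) 0)
          - (∑ n ∈ Finset.Icc 1 N, g n - (N:ℝ) * δ) := by
      rw [Finset.sum_congr rfl hid, Finset.sum_sub_distrib, ← Finset.mul_sum,
        Finset.sum_sub_distrib, Finset.sum_const, nsmul_eq_mul, hcard]
    rw [e1]
    linarith
  -- power bound
  have hkc' : (k:ℝ) * c' ≤ c / 400 := by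
    have e : (k:ℝ) * c' = c / (100000 * (k:ℝ)^4) := by
      rw [hc'eq]; field_simp
    rw [e, div_le_div_iff₀ (by positivity) (by norm_num : (0:ℝ) < 400)]
    have hx : 0 ≤ c * (100000*(k:ℝ)^4 - 400) := mul_nonneg hc.le (by linarith)
    linarith [hx]
  have hkc'' : (k:ℝ) * c' ≤ 1/100 := by linarith
  have hpow2 : (1 + c') ^ (k - 1) ≤ 2 := by
    have hcast : ((k - 1 : ℕ) : ℝ) = (k:ℝ) - 1 := by
      have : 1 ≤ k := by omega
      push_cast [this]; ring
    have hble : ((k - 1 : ℕ) : ℝ) * c' ≤ 1/2 := by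
      rw [hcast]
      have expand : ((k:ℝ) - 1) * c' = (k:ℝ) * c' - c' := by ring
      rw [expand]
      linarith [hkc'', hc'pos.le]
    have hmain := pow_one_add_le c' hc'pos.le (k - 1) hble
    rw [hcast] at hble hmain
    linarith [hmain, hble]
  -- step 2 : |Λ g − Λ δ| ≤ k * (2 δ^{k-1}) * (2 c' δ + W/N)
  have B2 : |lambdaR k N g - lambdaR k N (fun _ => δ)| ≤
      (k:ℝ) * (2 * δ ^ (k-1)) * (2 * (c' * δ) + W / (N:ℝ)) := by
    have hδle : δ ≤ (1 + c') * δ := by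
      have hcc := mul_nonneg hc'pos.le hδ.le
      linarith [hcc]
    have harg1 : ∀ n ∈ Finset.Icc 1 N, |g n| ≤ (1 + c') * δ := fun n hn => by
      rw [abs_of_nonneg (hg0 n hn)]; exact hgle n
    have harg2 : ∀ n ∈ Finset.Icc 1 N, |(fun _ : ℕ => δ) n| ≤ (1 + c') * δ := fun n _ => by
      simpa [abs_of_nonneg hδ.le] using hδle
    have harg3 : ∀ n ∈ Finset.Icc 1 N, |g n - (fun _ : ℕ => δ) n| ≤ |g n - δ| :=
      fun n _ => le_refl _
    have hb := lambda_diff_le k N g (fun _ => δ) (fun n => |g n - δ|) ((1 + c') * δ)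
      hCpos.le harg1 harg2 harg3 (fun n => abs_nonneg _)
    refine hb.trans ?_
    have e3 : ((1 + c') * δ) ^ (k-1) ≤ 2 * δ ^ (k-1) := by
      rw [mul_pow]
      have hd : (0:ℝ) ≤ δ ^ (k-1) := pow_nonneg hδ.le _
      exact mul_le_mul_of_nonneg_right hpow2 hd
    have e4 : ((N:ℝ)+1)⁻¹ * ∑ n ∈ Finset.Icc 1 N, |g n - δ|
        ≤ 2 * (c' * δ) + W / (N:ℝ) := by
      have s0 : (0:ℝ) ≤ ∑ n ∈ Finset.Icc 1 N, |g n - δ| :=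
        Finset.sum_nonneg fun n _ => abs_nonneg _
      have t1 : ((N:ℝ)+1)⁻¹ * ∑ n ∈ Finset.Icc 1 N, |g n - δ|
          ≤ ((N:ℝ)+1)⁻¹ * (2 * ((N:ℝ) * (c' * δ)) + W) :=
        mul_le_mul_of_nonneg_left hsumu2 (by positivity)
      refine t1.trans ?_
      have h5 : ((N:ℝ)+1)⁻¹ * (2 * ((N:ℝ) * (c' * δ))) ≤ 2 * (c' * δ) := by
        rw [inv_mul_le_iff₀ (by positivity)]
        have hcc := mul_nonneg hc'pos.le hδ.le
        linarith [hcc]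
      have h6 : ((N:ℝ)+1)⁻¹ * W ≤ W / (N:ℝ) := by
        rw [div_eq_inv_mul]
        exact mul_le_mul_of_nonneg_right hinvle hW0
      calc ((N:ℝ)+1)⁻¹ * (2 * ((N:ℝ) * (c' * δ)) + W)
          = ((N:ℝ)+1)⁻¹ * (2 * ((N:ℝ) * (c' * δ))) + ((N:ℝ)+1)⁻¹ * W := by ring
        _ ≤ 2 * (c' * δ) + W / (N:ℝ) := add_le_add h5 h6
    have hA0 : (0:ℝ) ≤ ((N:ℝ)+1)⁻¹ * ∑ n ∈ Finset.Icc 1 N, |g n - δ| := by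
      have := Finset.sum_nonneg (fun n (_ : n ∈ Finset.Icc 1 N) => abs_nonneg (g n - δ))
      positivity
    calc (k:ℝ) * ((1 + c') * δ) ^ (k-1) * (((N:ℝ)+1)⁻¹ * ∑ n ∈ Finset.Icc 1 N, |g n - δ|)
        ≤ (k:ℝ) * (2 * δ ^ (k-1)) * (((N:ℝ)+1)⁻¹ * ∑ n ∈ Finset.Icc 1 N, |g n - δ|) := by
          refine mul_le_mul_of_nonneg_right ?_ hA0
          exact mul_le_mul_of_nonneg_left e3 hk0.le
      _ ≤ (k:ℝ) * (2 * δ ^ (k-1)) * (2 * (c' * δ) + W / (N:ℝ)) := by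
          refine mul_le_mul_of_nonneg_left e4 ?_
          positivity
  -- combine
  have tri : c * δ ^ k / 2 ≤ (k:ℝ) * (W / (N:ℝ))
      + (k:ℝ) * (2 * δ ^ (k-1)) * (2 * (c' * δ) + W / (N:ℝ)) :=
    hlam.trans ((abs_sub_le _ (lambdaR k N g) _).trans (add_le_add B1 B2))
  have hp1 : δ ^ (k-1) * δ = δ ^ k := by
    rw [← pow_succ]
    congr 1
    omega
  have hp2 : δ ^ (k-1) ≤ 1 := pow_le_one₀ hδ.le hδ1
  have hωnn : (0:ℝ) ≤ W / (N:ℝ) := div_nonneg hW0 hNR.le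
  have hpk0 : (0:ℝ) ≤ δ ^ (k-1) := pow_nonneg hδ.le _
  have tri2 : c * δ ^ k / 2 ≤ 3 * (k:ℝ) * (W / (N:ℝ)) + 4 * (k:ℝ) * c' * δ ^ k := by
    have e5 : (k:ℝ) * (2 * δ ^ (k-1)) * (2 * (c' * δ) + W / (N:ℝ))
        = 4 * (k:ℝ) * c' * (δ ^ (k-1) * δ) + 2 * (k:ℝ) * δ ^ (k-1) * (W / (N:ℝ)) := by
      ring
    rw [e5, hp1] at tri
    have e6 : 2 * (k:ℝ) * δ ^ (k-1) * (W / (N:ℝ)) ≤ 2 * (k:ℝ) * (W / (N:ℝ)) := by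
      have hprod : 0 ≤ (2 * (k:ℝ) * (W / (N:ℝ))) * (1 - δ ^ (k-1)) :=
        mul_nonneg (mul_nonneg (by linarith : (0:ℝ) ≤ 2 * (k:ℝ)) hωnn)
          (by linarith : (0:ℝ) ≤ 1 - δ ^ (k-1))
      linarith [hprod]
    linarith
  have h100 : 4 * (k:ℝ) * c' * δ ^ k ≤ c * δ ^ k / 100 := by
    have hdk : (0:ℝ) ≤ δ ^ k := pow_nonneg hδ.le _
    have h4 : 4 * ((k:ℝ) * c') ≤ 4 * (c / 400) := by linarith [hkc']
    have := mul_le_mul_of_nonneg_right h4 hdk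
    linarith [this]
  -- finish
  have goalW : c * δ ^ k ≤ 20 * (k:ℝ) * (W / (N:ℝ)) := by
    have hkω : (0:ℝ) ≤ (k:ℝ) * (W / (N:ℝ)) := mul_nonneg hk0.le hωnn
    linarith [tri2, h100, hkω]
  rw [div_le_iff₀ (by positivity : (0:ℝ) < 20 * (k:ℝ))]
  calc c * δ ^ k ≤ 20 * (k:ℝ) * (W / (N:ℝ)) := goalW
    _ = 1 / (N:ℝ) * W * (20 * (k:ℝ)) := by ring
end
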